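/- Let k be a field of characteristic 0 and work in the polynomial ring k[X,Y,Z,W]. For any a, c ∈ k with c ≠ 0, one has the ideal identity ((X,Y)², Z(aY − cX)) ∩ (Y, Z) = (Y, Z) ∩ (aY − cX, Y²), where ((X,Y)², Z(aY−cX)) denotes the ideal generated by X², XY, Y² and Z(aY−cX). -/

import Mathlib

open MvPolynomial

private lemma sub_aeval_mem (k : Type*) [CommRing k] (p : MvPolynomial (Fin 4) k) :
    p - MvPolynomial.aeval (R := k) ![X 0, 0, 0, X 3] p ∈
      Ideal.span {(X 1 : MvPolynomial (Fin 4) k), X 2} := by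
  induction p using MvPolynomial.induction_on with
  | C a => simp
  | add p q hp hq =>
      have : p + q - aeval (R := k) ![X 0, 0, 0, X 3] (p + q)
          = (p - aeval (R := k) ![X 0, 0, 0, X 3] p) + (q - aeval (R := k) ![X 0, 0, 0, X 3] q) := by
        rw [map_add]; ring
      rw [this]; exact Ideal.add_mem _ hp hq
  | mul_X p i hp =>
      have : p * X i - aeval (R := k) ![X 0, 0, 0, X 3] (p * X i)
          = (p - aeval (R := k) ![X 0, 0, 0, X 3] p) * X i
            + aeval (R := k) ![X 0, 0, 0, X 3] p * (X i - aeval (R := k) ![X 0, 0, 0, X 3] (X i)) := by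
        rw [map_mul]; ring
      rw [this]
      refine Ideal.add_mem _ (Ideal.mul_mem_right _ _ hp) (Ideal.mul_mem_left _ _ ?_)
      fin_cases i <;> simp [aeval_X]
      · exact Ideal.subset_span (by simp)
      · exact Ideal.subset_span (by simp)

/-- In k[X,Y,Z,W] (variables X = X 0, Y = X 1, Z = X 2, W = X 3), for c ≠ 0:
((X,Y)², Z(aY − cX)) ∩ (Y, Z) = (Y, Z) ∩ (aY − cX, Y²). -/
theorem ideal_identity_case_II (k : Type*) [Field k] [CharZero k] (a c : k) (hc : c ≠ 0) :
    Ideal.span {(X 0 : MvPolynomial (Fin 4) k) ^ 2, X 0 * X 1, X 1 ^ 2,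
        X 2 * (C a * X 1 - C c * X 0)} ⊓
      Ideal.span {(X 1 : MvPolynomial (Fin 4) k), X 2} =
    Ideal.span {(X 1 : MvPolynomial (Fin 4) k), X 2} ⊓
      Ideal.span {C a * X 1 - C c * X 0, (X 1 : MvPolynomial (Fin 4) k) ^ 2} := by
  set L : MvPolynomial (Fin 4) k := C a * X 1 - C c * X 0 with hL
  have hC : (C c⁻¹ : MvPolynomial (Fin 4) k) * C c = 1 := by
    rw [← C_mul, inv_mul_cancel₀ hc, C_1]
  apply le_antisymm
  · refine le_inf inf_le_right (le_trans inf_le_left ?_)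
    rw [Ideal.span_le]
    rintro f hf
    simp only [Set.mem_insert_iff, Set.mem_singleton_iff] at hf
    rcases hf with rfl | rfl | rfl | rfl
    · -- X0^2 ∈ (L, Y²)
      rw [SetLike.mem_coe, hL, Ideal.mem_span_pair]
      exact ⟨-(C c⁻¹ * C c⁻¹) * (C a * X 1 + C c * X 0), C c⁻¹ * C c⁻¹ * C a * C a, by
        linear_combination (C c⁻¹ * C c + 1) * (X 0 : MvPolynomial (Fin 4) k) ^ 2 * hC⟩
    · -- X0*X1
      rw [SetLike.mem_coe, hL, Ideal.mem_span_pair]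
      exact ⟨-(C c⁻¹ * X 1), C c⁻¹ * C a, by
        linear_combination (X 0 : MvPolynomial (Fin 4) k) * X 1 * hC⟩
    · -- X1^2
      rw [SetLike.mem_coe, hL, Ideal.mem_span_pair]
      exact ⟨0, 1, by ring⟩
    · -- X2 * L
      rw [SetLike.mem_coe, hL, Ideal.mem_span_pair]
      exact ⟨X 2, 0, by ring⟩
  · refine le_inf ?_ inf_le_left
    intro f hf
    obtain ⟨hfJ, hfK⟩ := Ideal.mem_inf.mp hf
    obtain ⟨p, q, hpq⟩ := Ideal.mem_span_pair.mp hfK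
    set φ := aeval (R := k) ![X 0, 0, 0, (X 3 : MvPolynomial (Fin 4) k)] with hφ
    have hX1 : φ (X 1) = 0 := by simp [hφ]
    have hX2 : φ (X 2) = 0 := by simp [hφ]
    have hX0 : φ (X 0) = X 0 := by simp [hφ]
    have hφf : φ f = 0 := by
      obtain ⟨u, v, huv⟩ := Ideal.mem_span_pair.mp hfJ
      rw [← huv, map_add, map_mul, map_mul, hX1, hX2]; ring
    have hφp : φ p = 0 := by
      have h1 : φ p * (C c * X 0) = 0 := by
        have hCC : ∀ x : k, φ (C x) = C x := fun x => by simp [hφ]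
        have h2 := congrArg φ hpq
        simp only [map_add, map_mul, map_pow, hL, map_sub, hX1, hX0, hCC, hφf] at h2
        linear_combination -h2
      rcases mul_eq_zero.mp h1 with h | h
      · exact h
      · exact absurd h (mul_ne_zero (by simpa using hc) (X_ne_zero 0))
    have hp : p ∈ Ideal.span {(X 1 : MvPolynomial (Fin 4) k), X 2} := by
      have := sub_aeval_mem k p
      rwa [← hφ, hφp, sub_zero] at this
    obtain ⟨r, s, hrs⟩ := Ideal.mem_span_pair.mp hp
    have hf2 : f = (r * C a + q) * X 1 ^ 2 - r * C c * (X 0 * X 1) + s * (X 2 * L) := by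
      rw [← hpq, ← hrs, hL]; ring
    rw [hf2]
    refine Ideal.add_mem _ (Ideal.sub_mem _ ?_ ?_) ?_ <;>
      exact Ideal.mul_mem_left _ _ (Ideal.subset_span (by simp))
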